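/- Let f, g : ℝ → ℝ be regulated functions. Then, as an equality in [0, ∞], the supremum over t ∈ ℝ of |f(t+) − g(t+)| equals the essential supremum of |f − g| with respect to Lebesgue measure on ℝ; the same equality holds with right limits replaced by left limits. -/

import Mathlib

open Set Filter Topology MeasureTheory

/-- A set of reals that is uniformly isolated (each point has a punctured
neighborhood free of the set) is countable. -/
lemma countable_of_punctured_isolated {S : Set ℝ}
    (h : ∀ t ∈ S, ∃ δ > (0:ℝ), ∀ s ∈ S, s ≠ t → δ ≤ |s - t|) : S.Countable := by
  classical
  choose! δ hδpos hδ using h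
  have hd : S.PairwiseDisjoint (fun t => Ioo (t - δ t / 2) (t + δ t / 2)) := by
    intro a ha b hb hab
    refine Set.disjoint_left.2 fun x hxa hxb => ?_
    have h1 : |x - a| < δ a / 2 := by
      rw [abs_lt]; constructor <;> [linarith [hxa.1]; linarith [hxa.2]]
    have h2 : |x - b| < δ b / 2 := by
      rw [abs_lt]; constructor <;> [linarith [hxb.1]; linarith [hxb.2]]
    have hba : δ a ≤ |b - a| := hδ a ha b hb hab.symm
    have hab' : δ b ≤ |a - b| := hδ b hb a ha hab
    have : |b - a| ≤ |x - a| + |x - b| := by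
      calc |b - a| = |(x - a) - (x - b)| := by ring_nf
        _ ≤ |x - a| + |x - b| := abs_sub _ _
    rw [abs_sub_comm a b] at hab'
    have := abs_nonneg (b - a)
    linarith
  exact hd.countable_of_isOpen (fun t ht => isOpen_Ioo)
    (fun t ht => by
      refine ⟨t, ?_, ?_⟩ <;> simp <;> linarith [hδpos t ht])

/-- If `h` tends to `a` from the right at `t`, and `R s` is a one-sided limit of `h`
at each `s`, then `R` tends to `a` from the right at `t`. -/
lemma tendsto_limfun_right {h R : ℝ → ℝ}
    (hR : ∀ s : ℝ, Tendsto h (𝓝[<] s) (𝓝 (R s)) ∨ Tendsto h (𝓝[>] s) (𝓝 (R s)))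
    {t a : ℝ} (ha : Tendsto h (𝓝[>] t) (𝓝 a)) :
    Tendsto R (𝓝[>] t) (𝓝 a) := by
  rw [Metric.tendsto_nhds] at ha ⊢
  intro ε hε
  obtain ⟨u, hu, hIoo⟩ := mem_nhdsGT_iff_exists_Ioo_subset.mp
    (ha (ε / 2) (by positivity))
  have key : ∀ s ∈ Ioo t u, dist (R s) a ≤ ε / 2 := by
    intro s hs
    rcases hR s with hRs | hRs
    · have hmem : Ioo t s ∈ 𝓝[<] s := Ioo_mem_nhdsLT_of_mem ⟨hs.1, le_refl s⟩
      refine le_of_tendsto (hRs.dist (tendsto_const_nhds (x := a))) ?_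
      filter_upwards [hmem] with x hx
      exact le_of_lt (hIoo ⟨hx.1, hx.2.trans hs.2⟩)
    · have hmem : Ioo s u ∈ 𝓝[>] s := Ioo_mem_nhdsGT_of_mem ⟨le_refl s, hs.2⟩
      refine le_of_tendsto (hRs.dist (tendsto_const_nhds (x := a))) ?_
      filter_upwards [hmem] with x hx
      exact le_of_lt (hIoo ⟨hs.1.trans hx.1, hx.2⟩)
  filter_upwards [Ioo_mem_nhdsGT_of_mem (left_mem_Ico.mpr hu)] with s hs
  exact lt_of_le_of_lt (key s hs) (by linarith)

/-- If `h` tends to `a` from the left at `t`, and `R s` is a one-sided limit of `h`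
at each `s`, then `R` tends to `a` from the left at `t`. -/
lemma tendsto_limfun_left {h R : ℝ → ℝ}
    (hR : ∀ s : ℝ, Tendsto h (𝓝[<] s) (𝓝 (R s)) ∨ Tendsto h (𝓝[>] s) (𝓝 (R s)))
    {t a : ℝ} (ha : Tendsto h (𝓝[<] t) (𝓝 a)) :
    Tendsto R (𝓝[<] t) (𝓝 a) := by
  rw [Metric.tendsto_nhds] at ha ⊢
  intro ε hε
  obtain ⟨u, hu, hIoo⟩ := mem_nhdsLT_iff_exists_Ioo_subset.mp
    (ha (ε / 2) (by positivity))
  have key : ∀ s ∈ Ioo u t, dist (R s) a ≤ ε / 2 := by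
    intro s hs
    rcases hR s with hRs | hRs
    · have hmem : Ioo u s ∈ 𝓝[<] s := Ioo_mem_nhdsLT_of_mem ⟨hs.1, le_refl s⟩
      refine le_of_tendsto (hRs.dist (tendsto_const_nhds (x := a))) ?_
      filter_upwards [hmem] with x hx
      exact le_of_lt (hIoo ⟨hx.1, hx.2.trans hs.2⟩)
    · have hmem : Ioo s t ∈ 𝓝[>] s := Ioo_mem_nhdsGT_of_mem ⟨le_refl s, hs.2⟩
      refine le_of_tendsto (hRs.dist (tendsto_const_nhds (x := a))) ?_
      filter_upwards [hmem] with x hx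
      exact le_of_lt (hIoo ⟨hs.1.trans hx.1, hx.2⟩)
  filter_upwards [Ioo_mem_nhdsLT_of_mem (right_mem_Ioc.mpr hu)] with s hs
  exact lt_of_le_of_lt (key s hs) (by linarith)

/-- One-sided limits of `h` are bounded by the essential supremum of `‖h‖`. -/
lemma ofReal_abs_limit_le_essSup {h : ℝ → ℝ} {a : ℝ} {l : Filter ℝ}
    (hl : ∀ U ∈ l, ∃ v w : ℝ, v < w ∧ Ioo v w ⊆ U)
    (ha : Tendsto h l (𝓝 a)) :
    ENNReal.ofReal |a| ≤ essSup (fun s => (‖h s‖₊ : ENNReal)) volume := by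
  set E := essSup (fun s => (‖h s‖₊ : ENNReal)) volume with hE
  set G : Set ℝ := {s | ENNReal.ofReal |h s| ≤ E} with hG
  have hGfull : volume Gᶜ = 0 := by
    have h1 : ∀ᵐ s, (‖h s‖₊ : ENNReal) ≤ E := ENNReal.ae_le_essSup _
    have h2 : ∀ᵐ s, s ∈ G := by
      filter_upwards [h1] with s hs
      simpa [hG, ← Real.enorm_eq_ofReal_abs] using (show ‖h s‖ₑ ≤ E from hs)
    exact ae_iff.mp h2
  have hne : (l ⊓ 𝓟 G).NeBot := by
    rw [inf_principal_neBot_iff]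
    intro U hU
    obtain ⟨v, w, hvw, hsub⟩ := hl U hU
    by_contra hemp
    rw [not_nonempty_iff_eq_empty] at hemp
    have hsub2 : Ioo v w ⊆ Gᶜ := fun x hx => fun hxG =>
      (Set.eq_empty_iff_forall_notMem.mp hemp x) ⟨hsub hx, hxG⟩
    have := measure_mono_null hsub2 hGfull
    rw [Real.volume_Ioo] at this
    exact (ENNReal.ofReal_pos.mpr (by linarith)).ne' this
  have htd : Tendsto (fun s => ENNReal.ofReal |h s|) (l ⊓ 𝓟 G)
      (𝓝 (ENNReal.ofReal |a|)) :=
    (ENNReal.continuous_ofReal.tendsto _).comp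
      ((continuous_abs.tendsto a).comp (ha.mono_left inf_le_left))
  refine le_of_tendsto htd ?_
  filter_upwards [mem_inf_of_right (mem_principal_self G)] with s hs
  exact hs

lemma nhdsWithin_Ioi_Ioo_struct (t : ℝ) :
    ∀ U ∈ 𝓝[>] t, ∃ v w : ℝ, v < w ∧ Ioo v w ⊆ U := by
  intro U hU
  obtain ⟨u, hu, hsub⟩ := mem_nhdsGT_iff_exists_Ioo_subset.mp hU
  exact ⟨t, u, hu, hsub⟩

lemma nhdsWithin_Iio_Ioo_struct (t : ℝ) :
    ∀ U ∈ 𝓝[<] t, ∃ v w : ℝ, v < w ∧ Ioo v w ⊆ U := by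
  intro U hU
  obtain ⟨u, hu, hsub⟩ := mem_nhdsLT_iff_exists_Ioo_subset.mp hU
  exact ⟨u, t, hu, hsub⟩

/-- A function with one-sided limits everywhere agrees a.e. with its right-limit function. -/
lemma ae_eq_right_limfun {h R L : ℝ → ℝ}
    (hRh : ∀ t, Tendsto h (𝓝[>] t) (𝓝 (R t)))
    (hLh : ∀ t, Tendsto h (𝓝[<] t) (𝓝 (L t))) :
    ∀ᵐ t : ℝ, h t = R t := by
  have hboth : ∀ s : ℝ, Tendsto h (𝓝[<] s) (𝓝 (R s)) ∨ Tendsto h (𝓝[>] s) (𝓝 (R s)) :=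
    fun s => Or.inr (hRh s)
  have hcount : {t : ℝ | h t ≠ R t}.Countable := by
    have hsub : {t : ℝ | h t ≠ R t} ⊆
        ⋃ n : ℕ, {t : ℝ | 1 / (n + 1 : ℝ) ≤ |h t - R t|} := by
      intro t ht
      have habs : 0 < |h t - R t| := abs_pos.mpr (sub_ne_zero.mpr ht)
      obtain ⟨n, hn⟩ := exists_nat_one_div_lt habs
      exact mem_iUnion.mpr ⟨n, le_of_lt hn⟩
    refine Set.Countable.mono hsub (countable_iUnion fun n => ?_)
    apply countable_of_punctured_isolated
    intro t ht
    have hev : ∀ᶠ s in 𝓝[≠] t, |h s - R s| < 1 / (n + 1 : ℝ) := by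
      rw [← nhdsLT_sup_nhdsGT, eventually_sup]
      have hpos : (0:ℝ) < 1 / (n + 1 : ℝ) := by positivity
      constructor
      · have h2 : Tendsto R (𝓝[<] t) (𝓝 (L t)) := tendsto_limfun_left hboth (hLh t)
        have h3 : Tendsto (fun s => |h s - R s|) (𝓝[<] t) (𝓝 |L t - L t|) :=
          ((hLh t).sub h2).abs
        rw [sub_self, abs_zero] at h3
        exact h3.eventually (gt_mem_nhds hpos)
      · have h2 : Tendsto R (𝓝[>] t) (𝓝 (R t)) := tendsto_limfun_right hboth (hRh t)
        have h3 : Tendsto (fun s => |h s - R s|) (𝓝[>] t) (𝓝 |R t - R t|) :=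
          ((hRh t).sub h2).abs
        rw [sub_self, abs_zero] at h3
        exact h3.eventually (gt_mem_nhds hpos)
    rw [eventually_nhdsWithin_iff] at hev
    obtain ⟨δ, hδpos, hδ⟩ := Metric.eventually_nhds_iff.mp hev
    refine ⟨δ, hδpos, fun s hs hst => ?_⟩
    by_contra hcon
    push_neg at hcon
    rw [← Real.dist_eq] at hcon
    exact absurd hs (not_le.mpr (hδ hcon hst))
  have hzero : volume {t : ℝ | h t ≠ R t} = 0 := hcount.measure_zero _
  rw [ae_iff]
  exact hzero

/-- A function `f : ℝ → ℝ` is regulated if at every point the one-sided limits exist. -/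
def Regulated (f : ℝ → ℝ) : Prop :=
  ∀ t : ℝ, (∃ l : ℝ, Tendsto f (𝓝[<] t) (𝓝 l)) ∧ ∃ l : ℝ, Tendsto f (𝓝[>] t) (𝓝 l)

/-- For regulated `f, g : ℝ → ℝ`, the supremum over `t` of `|f(t+) − g(t+)|`
equals the essential supremum (`L^∞`-norm) of `|f − g|` w.r.t. Lebesgue measure, as an
equality in `[0, ∞]`; and likewise for the left limits.  Here `Rf, Rg` (resp. `Lf, Lg`)
are the functions of right (resp. left) limits of `f` and `g`. -/
theorem sup_of_limit_differences_eq_essSup (f g : ℝ → ℝ)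
    (hf : Regulated f) (hg : Regulated g)
    (Lf Rf Lg Rg : ℝ → ℝ)
    (hLf : ∀ t, Tendsto f (𝓝[<] t) (𝓝 (Lf t)))
    (hRf : ∀ t, Tendsto f (𝓝[>] t) (𝓝 (Rf t)))
    (hLg : ∀ t, Tendsto g (𝓝[<] t) (𝓝 (Lg t)))
    (hRg : ∀ t, Tendsto g (𝓝[>] t) (𝓝 (Rg t))) :
    (⨆ t : ℝ, ENNReal.ofReal |Rf t - Rg t|) =
        eLpNorm (fun t => f t - g t) ⊤ (volume : Measure ℝ) ∧
      (⨆ t : ℝ, ENNReal.ofReal |Lf t - Lg t|) =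
        eLpNorm (fun t => f t - g t) ⊤ (volume : Measure ℝ) := by
  set h : ℝ → ℝ := fun t => f t - g t with hh
  set R : ℝ → ℝ := fun t => Rf t - Rg t with hR
  set L : ℝ → ℝ := fun t => Lf t - Lg t with hL
  have hRh : ∀ t, Tendsto h (𝓝[>] t) (𝓝 (R t)) := fun t => (hRf t).sub (hRg t)
  have hLh : ∀ t, Tendsto h (𝓝[<] t) (𝓝 (L t)) := fun t => (hLf t).sub (hLg t)
  have hae : ∀ᵐ t : ℝ, h t = R t := ae_eq_right_limfun hRh hLh
  have hlp : eLpNorm h ⊤ (volume : Measure ℝ)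
      = essSup (fun s => (‖h s‖₊ : ENNReal)) volume := by
    rw [eLpNorm_exponent_top, eLpNormEssSup]; rfl
  have haele : ∀ᵐ s : ℝ, (‖h s‖₊ : ENNReal) = ENNReal.ofReal |R s| := by
    filter_upwards [hae] with s hs
    rw [← Real.enorm_eq_ofReal_abs, hs]; rfl
  constructor
  · apply le_antisymm
    · refine iSup_le fun t => ?_
      rw [hlp]
      exact ofReal_abs_limit_le_essSup (nhdsWithin_Ioi_Ioo_struct t) (hRh t)
    · rw [hlp]
      refine essSup_le_of_ae_le _ ?_
      filter_upwards [haele] with s hs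
      rw [hs]
      exact le_iSup (fun t => ENNReal.ofReal |R t|) s
  · apply le_antisymm
    · refine iSup_le fun t => ?_
      rw [hlp]
      exact ofReal_abs_limit_le_essSup (nhdsWithin_Iio_Ioo_struct t) (hLh t)
    · rw [hlp]
      refine essSup_le_of_ae_le _ ?_
      filter_upwards [haele] with s hs
      rw [hs]
      -- `R s` is the limit of `L` from the right at `s`
      have hLR : Tendsto L (𝓝[>] s) (𝓝 (R s)) :=
        tendsto_limfun_right (fun u => Or.inl (hLh u)) (hRh s)
      have htd : Tendsto (fun u => ENNReal.ofReal |L u|) (𝓝[>] s)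
          (𝓝 (ENNReal.ofReal |R s|)) :=
        (ENNReal.continuous_ofReal.tendsto _).comp ((continuous_abs.tendsto _).comp hLR)
      refine le_of_tendsto htd ?_
      filter_upwards with u
      exact le_iSup (fun t => ENNReal.ofReal |L t|) u
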